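/- Let G be an unmixed bipartite graph on vertex set {x_1,...,x_n} ∪ {y_1,...,y_n} with n ≥ 2, satisfying: (a) {x_i, y_i} ∈ E(G) for all i, and (b) if {x_i,y_j} ∈ E(G) and {x_j,y_k} ∈ E(G) then {x_i,y_k} ∈ E(G) for distinct i,j,k. Suppose G has an induced subgraph equal to the complete bipartite graph on {x_i,x_j} ∪ {y_i,y_j} for some i < j. Let H be the induced subgraph on the vertex set minus {x_j, y_j}. Then for any subset C of the vertices of H with x_i ∈ C: C is a minimal vertex cover of H if and only if C ∪ {x_j} is a minimal vertex cover of G. -/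

import Mathlib

/-- `C` is a vertex cover of the subgraph of the bipartite graph with
edge relation `E` (edges `{x i, y j}` for `E i j`) induced on the vertices
`{x i, y i : i ∈ F}`. -/
def IsCoverOn (n : ℕ) (E : Fin n → Fin n → Prop) (F : Set (Fin n))
    (C : Set (Fin n ⊕ Fin n)) : Prop :=
  (∀ v ∈ C, Sum.elim (· ∈ F) (· ∈ F) v) ∧
  (∀ i ∈ F, ∀ j ∈ F, E i j → Sum.inl i ∈ C ∨ Sum.inr j ∈ C)

/-- `C` is a minimal vertex cover of the induced subgraph on `F`. -/
def IsMinCoverOn (n : ℕ) (E : Fin n → Fin n → Prop) (F : Set (Fin n))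
    (C : Set (Fin n ⊕ Fin n)) : Prop :=
  IsCoverOn n E F C ∧ ∀ D ⊂ C, ¬ IsCoverOn n E F D

/-- The vertex set `{x k : k ∈ α} ∪ {y k : k ∈ F \ α}` attached to `α ⊆ F`. -/
def coverSetOn (n : ℕ) (F α : Set (Fin n)) : Set (Fin n ⊕ Fin n) :=
  (Sum.inl '' α) ∪ (Sum.inr '' (F \ α))

/-- The lattice `L_{G_F}` of the induced subgraph `G_F`: those `α ⊆ F` whose
associated vertex set is a minimal vertex cover of `G_F`. -/
def LGF (n : ℕ) (E : Fin n → Fin n → Prop) (F : Set (Fin n)) : Set (Set (Fin n)) :=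
  {α | α ⊆ F ∧ IsMinCoverOn n E F (coverSetOn n F α)}

/-- In a minimal cover of an induced subgraph (with loops everywhere and the
transitivity condition), a vertex `x i` in the cover forces `y i` out. -/
lemma lemA (n : ℕ) (E : Fin n → Fin n → Prop)
    (ha : ∀ i, E i i)
    (hb : ∀ i j k : Fin n, i ≠ j → j ≠ k → i ≠ k → E i j → E j k → E i k)
    (F : Set (Fin n)) (i : Fin n) (hiF : i ∈ F)
    (C : Set (Fin n ⊕ Fin n)) (hmc : IsMinCoverOn n E F C)
    (hi : Sum.inl i ∈ C) : Sum.inr i ∉ C := by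
  intro hri
  obtain ⟨⟨hC1, hC2⟩, hmin⟩ := hmc
  have h1 : ¬ IsCoverOn n E F (C \ {Sum.inr i}) :=
    hmin _ (Set.sdiff_singleton_ssubset.mpr hri)
  have hl : ∃ l ∈ F, E l i ∧ Sum.inl l ∉ C := by
    by_contra h
    push_neg at h
    apply h1
    refine ⟨fun v hv => hC1 v hv.1, ?_⟩
    intro k hk m hm hE
    by_cases hmi : m = i
    · subst hmi
      exact Or.inl ⟨h k hk hE, by simp⟩
    · rcases hC2 k hk m hm hE with h' | h'
      · exact Or.inl ⟨h', by simp⟩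
      · exact Or.inr ⟨h', by simp [hmi]⟩
  have h2 : ¬ IsCoverOn n E F (C \ {Sum.inl i}) :=
    hmin _ (Set.sdiff_singleton_ssubset.mpr hi)
  have hm : ∃ m ∈ F, E i m ∧ Sum.inr m ∉ C := by
    by_contra h
    push_neg at h
    apply h2
    refine ⟨fun v hv => hC1 v hv.1, ?_⟩
    intro k hk m hm hE
    by_cases hki : k = i
    · subst hki
      exact Or.inr ⟨h m hm hE, by simp⟩
    · rcases hC2 k hk m hm hE with h' | h'
      · exact Or.inl ⟨h', by simp [hki]⟩
      · exact Or.inr ⟨h', by simp⟩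
  obtain ⟨l, hlF, hEli, hlC⟩ := hl
  obtain ⟨m, hmF, hEim, hmC⟩ := hm
  have hli : l ≠ i := fun h => hlC (h ▸ hi)
  have him : i ≠ m := fun h => hmC (h ▸ hri)
  by_cases hlm : l = m
  · subst hlm
    rcases hC2 l hlF l hlF (ha l) with h' | h'
    · exact hlC h'
    · exact hmC h'
  · rcases hC2 l hlF m hmF (hb l i m hli him hlm hEli hEim) with h' | h'
    · exact hlC h'
    · exact hmC h'

/-- Lemma 1.2(i): with `K_{{i,j}}` an induced subgraph and `H` the induced
subgraph on the vertices other than `x j, y j`, for `C ⊆ V(H)` with `x i ∈ C`,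
`C` is a minimal vertex cover of `H` iff `C ∪ {x j}` is one of `G`. -/
theorem stmt0 (n : ℕ) (hn : 2 ≤ n) (E : Fin n → Fin n → Prop)
    (ha : ∀ i, E i i)
    (hb : ∀ i j k : Fin n, i ≠ j → j ≠ k → i ≠ k → E i j → E j k → E i k)
    (i j : Fin n) (hij : i < j) (hEij : E i j) (hEji : E j i)
    (C : Set (Fin n ⊕ Fin n))
    (hC : ∀ v ∈ C, Sum.elim (· ≠ j) (· ≠ j) v)
    (hxi : Sum.inl i ∈ C) :
    IsMinCoverOn n E {k | k ≠ j} C ↔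
      IsMinCoverOn n E Set.univ (C ∪ {Sum.inl j}) := by
  have hiF : i ∈ {k | k ≠ j} := (ne_of_lt hij : i ≠ j)
  have hjC : Sum.inl j ∉ C := fun h => (hC _ h) rfl
  constructor
  · intro hmc
    have hri : Sum.inr i ∉ C := lemA n E ha hb _ i hiF C hmc hxi
    obtain ⟨⟨hC1, hC2⟩, hmin⟩ := hmc
    constructor
    · refine ⟨fun v _ => ?_, ?_⟩
      · rcases v with a | a <;> exact Set.mem_univ _
      · intro k _ m _ hE
        by_cases hkj : k = j
        · exact Or.inl (Or.inr (by simp [hkj]))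
        · by_cases hmj : m = j
          · by_cases hki : k = i
            · exact Or.inl (Or.inl (hki ▸ hxi))
            · have hEki : E k i := hb k j i hkj (ne_of_lt hij).symm hki (hmj ▸ hE) hEji
              rcases hC2 k hkj i hiF hEki with h' | h'
              · exact Or.inl (Or.inl h')
              · exact absurd h' hri
          · rcases hC2 k hkj m hmj hE with h' | h'
            · exact Or.inl (Or.inl h')
            · exact Or.inr (Or.inl h')
    · intro D hD ⟨hD1, hD2⟩
      by_cases hjD : Sum.inl j ∈ D
      · have hsub : D \ {Sum.inl j} ⊆ C := by
          intro v hv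
          rcases hD.subset hv.1 with h' | h'
          · exact h'
          · exact absurd h' hv.2
        have hne : D \ {Sum.inl j} ≠ C := by
          intro hEq
          obtain ⟨w, hw, hwD⟩ := Set.exists_of_ssubset hD
          rcases hw with hw | hw
          · exact hwD ((hEq ▸ hw : w ∈ D \ {Sum.inl j}).1)
          · exact hwD (hw ▸ hjD)
        refine hmin _ (Set.ssubset_iff_subset_ne.mpr ⟨hsub, hne⟩) ?_
        refine ⟨fun v hv => hC _ (hsub hv), ?_⟩
        intro k hk m hm hE
        rcases hD2 k trivial m trivial hE with h' | h'
        · exact Or.inl ⟨h', fun h => hk (Sum.inl.inj h)⟩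
        · exact Or.inr ⟨h', fun h => (Sum.inr_ne_inl h).elim⟩
      · rcases hD2 j trivial i trivial hEji with h' | h'
        · exact hjD h'
        · rcases hD.subset h' with h'' | h''
          · exact hri h''
          · exact (Sum.inr_ne_inl h'').elim
  · intro hmc
    have hri : Sum.inr i ∉ C ∪ {Sum.inl j} :=
      lemA n E ha hb Set.univ i trivial _ hmc (Or.inl hxi)
    have hri' : Sum.inr i ∉ C := fun h => hri (Or.inl h)
    obtain ⟨⟨hG1, hG2⟩, hGmin⟩ := hmc
    constructor
    · refine ⟨fun v hv => hC v hv, ?_⟩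
      intro k hk m hm hE
      rcases hG2 k trivial m trivial hE with h' | h'
      · rcases h' with h' | h'
        · exact Or.inl h'
        · exact absurd (Sum.inl.inj h') hk
      · rcases h' with h' | h'
        · exact Or.inr h'
        · exact (Sum.inr_ne_inl h').elim
    · intro D hD ⟨hD1, hD2⟩
      have hjD : Sum.inl j ∉ D := fun h => hjC (hD.subset h)
      have hsub : D ∪ {Sum.inl j} ⊆ C ∪ {Sum.inl j} :=
        Set.union_subset_union_left _ hD.subset
      have hne : D ∪ {Sum.inl j} ≠ C ∪ {Sum.inl j} := by
        intro hEq
        obtain ⟨w, hw, hwD⟩ := Set.exists_of_ssubset hD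
        have : w ∈ D ∪ {Sum.inl j} := hEq ▸ Or.inl hw
        rcases this with h' | h'
        · exact hwD h'
        · exact hjC (h' ▸ hw)
      have hiD : Sum.inl i ∈ D := by
        rcases hD2 i hiF i hiF (ha i) with h' | h'
        · exact h'
        · exact absurd (hD.subset h') hri'
      refine hGmin _ (Set.ssubset_iff_subset_ne.mpr ⟨hsub, hne⟩) ?_
      refine ⟨fun v _ => by rcases v with a | a <;> exact Set.mem_univ _, ?_⟩
      intro k _ m _ hE
      by_cases hkj : k = j
      · exact Or.inl (Or.inr (by simp [hkj]))
      · by_cases hmj : m = j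
        · by_cases hki : k = i
          · exact Or.inl (Or.inl (hki ▸ hiD))
          · have hEki : E k i := hb k j i hkj (ne_of_lt hij).symm hki (hmj ▸ hE) hEji
            rcases hD2 k hkj i hiF hEki with h' | h'
            · exact Or.inl (Or.inl h')
            · exact absurd (hD.subset h') hri'
        · rcases hD2 k hkj m hmj hE with h' | h'
          · exact Or.inl (Or.inl h')
          · exact Or.inr (Or.inl h')
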